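/- Let $\mathfrak{g}$ be a finite-dimensional complex simple Lie algebra and $\mathfrak{L}(\mathfrak{g})$ its affine-Virasoro Lie algebra. If $D$ is a derivation of $\mathfrak{L}(\mathfrak{g})$ of degree zero (i.e., $D(\mathfrak{L}(\mathfrak{g})_m) \subseteq \mathfrak{L}(\mathfrak{g})_m$ for all $m$) that vanishes on $\widetilde{\mathfrak{g}} = \mathfrak{g} \otimes \mathbb{C}[t^{\pm 1}] \oplus \mathbb{C}K_1$, then $D(d_m) = 0$ for all $m \in \mathbb{Z}$ and $D(K_2) = 0$; hence $D = 0$. -/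

import Mathlib

/-- The affine-Virasoro Lie algebra structure: `L` is the affine-Virasoro Lie algebra
associated with the Lie algebra `g`, with `E m x` playing the role of `x ⊗ tᵐ`,
`d m` the Virasoro generators, and central elements `K₁, K₂`. -/
structure AffineVirasoro (g L : Type*) [LieRing g] [LieAlgebra ℂ g]
    [LieRing L] [LieAlgebra ℂ L] where
  E : ℤ → g →ₗ[ℂ] L
  d : ℤ → L
  K₁ : L
  K₂ : L
  bracket_EE : ∀ (m n : ℤ) (x y : g), ⁅E m x, E n y⁆ =
    E (m + n) ⁅x, y⁆ + (if m + n = 0 then ((m : ℂ) * killingForm ℂ g x y) • K₁ else 0)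
  bracket_dE : ∀ (m n : ℤ) (x : g), ⁅d m, E n x⁆ = (n : ℂ) • E (m + n) x
  bracket_dd : ∀ m n : ℤ, ⁅d m, d n⁆ =
    ((n : ℂ) - (m : ℂ)) • d (m + n) +
      (if m + n = 0 then (((m : ℂ) ^ 3 - (m : ℂ)) / 12) • K₂ else 0)
  central_K₁ : ∀ v : L, ⁅v, K₁⁆ = 0
  central_K₂ : ∀ v : L, ⁅v, K₂⁆ = 0
  spans : Submodule.span ℂ
    (({K₁, K₂} : Set L) ∪ Set.range d ∪ ⋃ m : ℤ, Set.range (E m)) = ⊤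
  indep : ∀ (f : ℤ →₀ g) (c : ℤ →₀ ℂ) (a b : ℂ),
    ((f.sum fun m x => E m x) + (c.sum fun m t => t • d m) + a • K₁ + b • K₂ = 0) →
    f = 0 ∧ c = 0 ∧ a = 0 ∧ b = 0

/-- The degree-`n` graded component `L(g)ₙ` of the affine-Virasoro Lie algebra. -/
def AffineVirasoro.graded {g L : Type*} [LieRing g] [LieAlgebra ℂ g]
    [LieRing L] [LieAlgebra ℂ L] (V : AffineVirasoro g L) (n : ℤ) : Submodule ℂ L :=
  if n = 0 then
    Submodule.span ℂ (Set.range (V.E 0) ∪ {V.d 0, V.K₁, V.K₂})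
  else
    Submodule.span ℂ (Set.range (V.E n) ∪ {V.d n})

/-- The degree-`n` component `g̃ₙ` of the ideal `g̃ = ĝ ⊕ ℂK₁`. -/
def AffineVirasoro.gtilde {g L : Type*} [LieRing g] [LieAlgebra ℂ g]
    [LieRing L] [LieAlgebra ℂ L] (V : AffineVirasoro g L) (n : ℤ) : Submodule ℂ L :=
  if n = 0 then
    Submodule.span ℂ (Set.range (V.E 0) ∪ {V.K₁})
  else
    Submodule.span ℂ (Set.range (V.E n))

section Helpers

variable {g L : Type*} [LieRing g] [LieAlgebra ℂ g]
    [LieRing L] [LieAlgebra ℂ L] (V : AffineVirasoro g L)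

/-- Independence in simple four-term form. -/
lemma AffineVirasoro.indep' (m k : ℤ) (y : g) (c a b : ℂ)
    (h : V.E m y + c • V.d k + a • V.K₁ + b • V.K₂ = 0) :
    y = 0 ∧ c = 0 ∧ a = 0 ∧ b = 0 := by
  have h2 := V.indep (Finsupp.single m y) (Finsupp.single k c) a b ?_
  · refine ⟨?_, ?_, h2.2.2.1, h2.2.2.2⟩
    · have := h2.1
      rwa [Finsupp.single_eq_zero] at this
    · have := h2.2.1
      rwa [Finsupp.single_eq_zero] at this
  · rw [Finsupp.sum_single_index (by simp), Finsupp.sum_single_index (by simp)]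
    exact h

lemma AffineVirasoro.mem_graded_repr {n : ℤ} {v : L} (hv : v ∈ V.graded n) :
    ∃ (y : g) (c a b : ℂ), v = V.E n y + c • V.d n + a • V.K₁ + b • V.K₂ ∧
      (n ≠ 0 → a = 0 ∧ b = 0) := by
  unfold AffineVirasoro.graded at hv
  by_cases hn : n = 0
  · subst hn
    rw [if_pos rfl, Submodule.span_union, Submodule.mem_sup] at hv
    obtain ⟨v1, hv1, v2, hv2, rfl⟩ := hv
    rw [← LinearMap.coe_range, Submodule.span_eq] at hv1
    obtain ⟨y, rfl⟩ := hv1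
    rw [show ({V.d 0, V.K₁, V.K₂} : Set L) = insert (V.d 0) {V.K₁, V.K₂} from rfl,
      Submodule.mem_span_insert] at hv2
    obtain ⟨c, z, hz, rfl⟩ := hv2
    rw [Submodule.mem_span_pair] at hz
    obtain ⟨a, b, rfl⟩ := hz
    exact ⟨y, c, a, b, by abel, fun h => absurd rfl h⟩
  · rw [if_neg hn, Submodule.span_union, Submodule.mem_sup] at hv
    obtain ⟨v1, hv1, v2, hv2, rfl⟩ := hv
    rw [← LinearMap.coe_range, Submodule.span_eq] at hv1
    obtain ⟨y, rfl⟩ := hv1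
    rw [Submodule.mem_span_singleton] at hv2
    obtain ⟨c, rfl⟩ := hv2
    exact ⟨y, c, 0, 0, by simp, fun _ => ⟨rfl, rfl⟩⟩

end Helpers


/-- A degree-zero derivation of the affine-Virasoro Lie algebra vanishing on g̃ = g ⊗ ℂ[t,t⁻¹] ⊕ ℂK₁ kills all the dₘ and K₂, hence is zero. -/
theorem affineVirasoro_degree_zero_derivation (g L : Type*) [LieRing g] [LieAlgebra ℂ g] [LieAlgebra.IsSimple ℂ g] [FiniteDimensional ℂ g] [LieRing L] [LieAlgebra ℂ L] (V : AffineVirasoro g L)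
    (D : LieDerivation ℂ L L)
    (hdeg : ∀ (m : ℤ), ∀ v ∈ V.graded m, D v ∈ V.graded m)
    (hE : ∀ (m : ℤ) (x : g), D (V.E m x) = 0)
    (hK₁ : D V.K₁ = 0) :
    (∀ m : ℤ, D (V.d m) = 0) ∧ D V.K₂ = 0 ∧ D = 0 := by
  -- simple g facts
  have hcenter : ∀ y : g, (∀ x : g, ⁅y, x⁆ = 0) → y = 0 := by
    intro y h
    have hc : y ∈ LieAlgebra.center ℂ g := by
      intro x; rw [← lie_skew, h x, neg_zero]
    rw [LieAlgebra.center_eq_bot] at hc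
    exact hc
  have hnt : ∃ x : g, x ≠ 0 := by
    have h := LieAlgebra.IsSimple.non_abelian (R := ℂ) (L := g)
    by_contra hx
    push_neg at hx
    exact h ⟨fun x y => by rw [hx x, zero_lie]⟩
  -- the K's central on the left too
  have hK₁lie : ∀ v : L, ⁅V.K₁, v⁆ = 0 := fun v => by
    rw [← lie_skew, V.central_K₁, neg_zero]
  have hK₂lie : ∀ v : L, ⁅V.K₂, v⁆ = 0 := fun v => by
    rw [← lie_skew, V.central_K₂, neg_zero]
  -- a vector in graded m killing all E n x is a combination of K₁, K₂
  have key : ∀ (m : ℤ) (v : L), v ∈ V.graded m → (∀ (n : ℤ) (x : g), ⁅v, V.E n x⁆ = 0) →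
      ∃ a b : ℂ, v = a • V.K₁ + b • V.K₂ ∧ (m ≠ 0 → v = 0) := by
    intro m v hv hbr
    obtain ⟨y, c, a, b, rfl, hab⟩ := V.mem_graded_repr hv
    have hcomp : ∀ n : ℤ, m + n ≠ 0 → ∀ x : g, ⁅y, x⁆ + (c * (n : ℂ)) • x = 0 := by
      intro n hmn x
      have h0 := hbr n x
      rw [add_lie, add_lie, add_lie, smul_lie, smul_lie, smul_lie, hK₁lie, hK₂lie,
        V.bracket_EE, V.bracket_dE, if_neg hmn] at h0
      have h1 : V.E (m + n) (⁅y, x⁆ + (c * (n : ℂ)) • x) + (0:ℂ) • V.d 0 +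
          (0:ℂ) • V.K₁ + (0:ℂ) • V.K₂ = 0 := by
        rw [map_add, map_smul]
        simp only [zero_smul, add_zero, smul_zero] at h0 ⊢
        simpa [smul_smul] using h0
      exact (V.indep' (m + n) 0 _ 0 0 0 h1).1
    have h1 := hcomp (1 - m) (by omega)
    have h2 := hcomp (2 - m) (by omega)
    have hc0 : c = 0 := by
      obtain ⟨x, hx⟩ := hnt
      have := sub_eq_zero.mpr (congrArg id ((h2 x).trans (h1 x).symm))
      have hcx : (c * ((2 - m : ℤ) : ℂ) - c * ((1 - m : ℤ) : ℂ)) • x = 0 := by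
        rw [sub_smul]
        have := (h2 x).symm ▸ (h1 x)
        linear_combination (norm := module) h2 x - h1 x
      have hco : (c * ((2 - m : ℤ) : ℂ) - c * ((1 - m : ℤ) : ℂ)) = c := by
        push_cast; ring
      rw [hco] at hcx
      exact (smul_eq_zero.mp hcx).resolve_right hx
    have hy0 : y = 0 := by
      apply hcenter
      intro x
      have := h1 x
      rw [hc0, zero_mul, zero_smul, add_zero] at this
      exact this
    subst hc0 hy0
    refine ⟨a, b, by simp, fun hm => ?_⟩
    obtain ⟨ha, hb⟩ := hab hm
    simp [ha, hb]
  -- D of brackets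
  have hDbrE : ∀ (m n : ℤ) (x : g), ⁅D (V.d m), V.E n x⁆ = 0 := by
    intro m n x
    have h := D.apply_lie_eq_add (V.d m) (V.E n x)
    rw [V.bracket_dE, map_smul, hE, hE, smul_zero, lie_zero] at h
    simpa using h.symm
  -- membership of d m in graded m
  have hdm : ∀ m : ℤ, V.d m ∈ V.graded m := by
    intro m
    unfold AffineVirasoro.graded
    by_cases hm : m = 0
    · subst hm; rw [if_pos rfl]
      exact Submodule.subset_span (Or.inr (by simp))
    · rw [if_neg hm]
      exact Submodule.subset_span (Or.inr rfl)
  have hK₂mem : V.K₂ ∈ V.graded 0 := by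
    unfold AffineVirasoro.graded
    rw [if_pos rfl]
    exact Submodule.subset_span (Or.inr (by simp))
  -- D d m = 0 for m ≠ 0
  have hDdne : ∀ m : ℤ, m ≠ 0 → D (V.d m) = 0 := by
    intro m hm
    obtain ⟨a, b, _, h0⟩ := key m (D (V.d m)) (hdeg m _ (hdm m)) (fun n x => hDbrE m n x)
    exact h0 hm
  -- D d 0 = a K₁ + b K₂, then use ⁅d 1, d (-1)⁆ = -2 d 0
  have hDd0 : D (V.d 0) = 0 := by
    have h := D.apply_lie_eq_add (V.d 1) (V.d (-1))
    rw [V.bracket_dd, hDdne 1 one_ne_zero, hDdne (-1) (by norm_num), zero_lie, lie_zero,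
      add_zero] at h
    norm_num at h
    exact h
  have hDd : ∀ m : ℤ, D (V.d m) = 0 := by
    intro m
    by_cases hm : m = 0
    · subst hm; exact hDd0
    · exact hDdne m hm
  -- D K₂ = 0 using ⁅d 2, d (-2)⁆ = -4 d 0 + (1/2) K₂
  have hDK₂ : D V.K₂ = 0 := by
    have h := D.apply_lie_eq_add (V.d 2) (V.d (-2))
    rw [V.bracket_dd, hDd 2, hDd (-2), zero_lie, lie_zero, add_zero] at h
    norm_num [map_add, map_smul, hDd 0] at h
    exact h
  refine ⟨hDd, hDK₂, ?_⟩
  -- D = 0 on all generators hence on L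
  ext v
  have hv : v ∈ (⊤ : Submodule ℂ L) := Submodule.mem_top
  rw [← V.spans] at hv
  simp only [LieDerivation.coe_zero, Pi.zero_apply]  -- goal D v = 0?
  induction hv using Submodule.span_induction with
  | mem w hw =>
    rcases hw with ((rfl | rfl) | ⟨m, rfl⟩) | hw
    · exact hK₁
    · exact hDK₂
    · exact hDd m
    · rw [Set.mem_iUnion] at hw
      obtain ⟨m, ⟨x, rfl⟩⟩ := hw
      exact hE m x
  | zero => simp
  | add x y _ _ hx hy => rw [map_add, hx, hy, add_zero]
  | smul c x _ hx => rw [map_smul, hx, smul_zero]
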